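/- Let R be a commutative ring, N an R-module, and F a module over the trivial square-zero extension R⋉N which is flat over R⋉N. Set E = F ⊗_{R⋉N} R = F/((0⊕N)·F), an R-module. Then the map E ⊗[R] N → F sending (x mod (0⊕N)·F) ⊗ n to (0,n)·x is a well-defined, injective R-linear map whose image is exactly the kernel of the quotient map F → E; in other words, tensoring F with the short exact sequence 0 → N → R⋉N → R → 0 yields a short exact sequence 0 → E ⊗[R] N → F → E → 0. -/
import Mathlib


open TensorProduct

set_option maxHeartbeats 2000000
set_option synthInstance.maxHeartbeats 800000

/-- Let `R` be a commutative ring, `N` an `R`-module, and `F` a module over the trivial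
square-zero extension `R⋉N` which is flat over `R⋉N`.  Set `E = F ⊗_{R⋉N} R = F/((0⊕N)·F)`.
Then the map `E ⊗[R] N → F` sending `(x mod (0⊕N)·F) ⊗ n` to `(0,n)·x` is a well-defined,
injective `R`-linear map whose image is exactly the kernel of the quotient map `F → E`;
i.e. tensoring `F` with `0 → N → R⋉N → R → 0` yields `0 → E ⊗[R] N → F → E → 0`. -/
theorem flat_deformation_gives_extension
    (R : Type) [CommRing R] (N : Type) [AddCommGroup N] [Module R N]
    (F : Type) [AddCommGroup F] :
    letI : Module Rᵐᵒᵖ N := Module.compHom N ((RingHom.id R).fromOpposite mul_comm)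
    haveI : IsCentralScalar R N := ⟨fun _ _ => rfl⟩
    ∀ [instF : Module (TrivSqZeroExt R N) F] [Module.Flat (TrivSqZeroExt R N) F],
      -- `F` and its quotients are regarded as `R`-modules by restriction of scalars
      -- along the inclusion `R → R⋉N`.
      letI : Module R F := Module.compHom F (algebraMap R (TrivSqZeroExt R N))
      haveI : IsScalarTower R (TrivSqZeroExt R N) F :=
        ⟨fun x y z => by rw [Algebra.smul_def, mul_smul]; rfl⟩
      -- the ideal `0 ⊕ N` of `R⋉N`:
      ∀ (K : Submodule (TrivSqZeroExt R N) F),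
        K = RingHom.ker (TrivSqZeroExt.fstHom R R N) • (⊤ : Submodule (TrivSqZeroExt R N) F) →
        letI : Module R (F ⧸ K) :=
          Module.compHom (F ⧸ K) (algebraMap R (TrivSqZeroExt R N))
        ∃ g : ((F ⧸ K) ⊗[R] N) →ₗ[R] F,
          (∀ (x : F) (n : N),
              g ((Submodule.Quotient.mk x : F ⧸ K) ⊗ₜ[R] n) =
                (TrivSqZeroExt.inr n : TrivSqZeroExt R N) • x) ∧
          Function.Injective g ∧
          LinearMap.range g = Submodule.restrictScalars R K := by
  intro instF instFlat K hK
  letI : Module Rᵐᵒᵖ N := Module.compHom N ((RingHom.id R).fromOpposite mul_comm)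
  haveI : IsCentralScalar R N := ⟨fun _ _ => rfl⟩
  letI : Module R F := Module.compHom F (algebraMap R (TrivSqZeroExt R N))
  haveI : IsScalarTower R (TrivSqZeroExt R N) F :=
    ⟨fun x y z => by rw [Algebra.smul_def, mul_smul]; rfl⟩
  letI : Module R (F ⧸ K) :=
    Module.compHom (F ⧸ K) (algebraMap R (TrivSqZeroExt R N))
  haveI instQT : IsScalarTower R (TrivSqZeroExt R N) (F ⧸ K) :=
    ⟨fun x y z => by rw [Algebra.smul_def, mul_smul]; rfl⟩
  set A := TrivSqZeroExt R N with hA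
  set I : Ideal A := RingHom.ker (TrivSqZeroExt.fstHom R R N) with hIdef
  -- basic facts about the ideal I = 0 ⊕ N
  have memI : ∀ a : A, a ∈ I ↔ TrivSqZeroExt.fst a = 0 := fun a => Iff.rfl
  have inr_mem : ∀ n : N, (TrivSqZeroExt.inr n : A) ∈ I := fun n => by
    rw [memI]; exact TrivSqZeroExt.fst_inr R n
  have eq_inr : ∀ a : A, a ∈ I → a = TrivSqZeroExt.inr (TrivSqZeroExt.snd a) := by
    intro a ha
    have h0 : TrivSqZeroExt.fst a = 0 := (memI a).mp ha
    conv_lhs => rw [← TrivSqZeroExt.inl_fst_add_inr_snd_eq a]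
    rw [h0, TrivSqZeroExt.inl_zero, zero_add]
  have mulI : ∀ a : A, a ∈ I → ∀ n : N, (TrivSqZeroExt.inr n : A) * a = 0 := by
    intro a ha n
    rw [eq_inr a ha, TrivSqZeroExt.inr_mul_inr]
  have smulK : ∀ (n : N) (x : F), x ∈ K → (TrivSqZeroExt.inr n : A) • x = 0 := by
    intro n x hx
    rw [hK] at hx
    refine Submodule.smul_induction_on hx ?_ ?_
    · intro a ha y _
      rw [← mul_smul, mulI a ha n, zero_smul]
    · intro y z hy hz
      rw [smul_add, hy, hz, add_zero]
  have inr_smul : ∀ (r : R) (n : N), (TrivSqZeroExt.inr (r • n) : A) = r • TrivSqZeroExt.inr n := by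
    intro r n
    ext
    · simp [TrivSqZeroExt.fst_smul]
    · simp [TrivSqZeroExt.snd_smul]
  have mkQ_smul : ∀ (a : A) (x : F),
      (Submodule.Quotient.mk (a • x) : F ⧸ K) =
        TrivSqZeroExt.fst a • (Submodule.Quotient.mk x : F ⧸ K) := by
    intro a x
    have h1 : TrivSqZeroExt.fst a • (Submodule.Quotient.mk x : F ⧸ K) =
        (Submodule.Quotient.mk ((TrivSqZeroExt.inl (TrivSqZeroExt.fst a) : A) • x) : F ⧸ K) := rfl
    rw [h1, Submodule.Quotient.eq, ← sub_smul]
    have h2 : a - TrivSqZeroExt.inl (TrivSqZeroExt.fst a) =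
        TrivSqZeroExt.inr (TrivSqZeroExt.snd a) := by
      rw [sub_eq_iff_eq_add, add_comm]
      exact (TrivSqZeroExt.inl_fst_add_inr_snd_eq a).symm
    rw [h2, hK]
    exact Submodule.smul_mem_smul (inr_mem _) trivial
  -- the map g
  letI L : N → (F →ₗ[A] F) := fun n =>
    { toFun := fun x => (TrivSqZeroExt.inr n : A) • x
      map_add' := fun x y => smul_add _ x y
      map_smul' := fun a x => by
        simp only [RingHom.id_apply, smul_smul, mul_comm] }
  letI q : N → ((F ⧸ K) →ₗ[A] F) := fun n =>
    Submodule.liftQ K (L n) (fun x hx => LinearMap.mem_ker.mpr (smulK n x hx))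
  letI bigG : N →ₗ[R] ((F ⧸ K) →ₗ[R] F) :=
    { toFun := fun n => (q n).restrictScalars R
      map_add' := fun n m => LinearMap.ext fun y => by
        obtain ⟨x, rfl⟩ := Submodule.Quotient.mk_surjective K y
        show (TrivSqZeroExt.inr (n + m) : A) • x =
          (TrivSqZeroExt.inr n : A) • x + (TrivSqZeroExt.inr m : A) • x
        rw [TrivSqZeroExt.inr_add, add_smul]
      map_smul' := fun r n => LinearMap.ext fun y => by
        obtain ⟨x, rfl⟩ := Submodule.Quotient.mk_surjective K y
        show (TrivSqZeroExt.inr (r • n) : A) • x = r • ((TrivSqZeroExt.inr n : A) • x)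
        rw [inr_smul, smul_assoc] }
  letI g : ((F ⧸ K) ⊗[R] N) →ₗ[R] F := TensorProduct.lift bigG.flip
  have g_tmul : ∀ (x : F) (n : N),
      g ((Submodule.Quotient.mk x : F ⧸ K) ⊗ₜ[R] n) = (TrivSqZeroExt.inr n : A) • x :=
    fun x n => rfl
  -- the map ψ into I ⊗[A] F
  haveI : SMulCommClass A R I :=
    ⟨fun a r i => Subtype.ext (by
      show a • (r • (i : A)) = r • (a • (i : A))
      exact (smul_comm r a (i : A)).symm)⟩
  letI nel : N → I := fun n => ⟨TrivSqZeroExt.inr n, inr_mem n⟩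
  letI P : N → (F →ₗ[A] (I ⊗[A] F)) := fun n => (TensorProduct.mk A I F) (nel n)
  have PK : ∀ (n : N) (x : F), x ∈ K → P n x = 0 := by
    intro n x hx
    rw [hK] at hx
    refine Submodule.smul_induction_on hx ?_ ?_
    · intro a ha y _
      show nel n ⊗ₜ[A] (a • y) = 0
      rw [TensorProduct.tmul_smul, TensorProduct.smul_tmul']
      have : a • nel n = 0 := by
        apply Subtype.ext
        show a • (TrivSqZeroExt.inr n : A) = 0
        rw [smul_eq_mul, mul_comm, mulI a ha n]
      rw [this, TensorProduct.zero_tmul]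
    · intro y z hy hz
      show nel n ⊗ₜ[A] (y + z) = 0
      rw [TensorProduct.tmul_add]
      rw [show nel n ⊗ₜ[A] y = 0 from hy, show nel n ⊗ₜ[A] z = 0 from hz, add_zero]
  letI qP : N → ((F ⧸ K) →ₗ[A] (I ⊗[A] F)) := fun n =>
    Submodule.liftQ (R₂ := A) (M₂ := I ⊗[A] F) (τ₁₂ := RingHom.id A)
      K (P n) (fun x hx => LinearMap.mem_ker.mpr (PK n x hx))
  letI bigΨ : N →ₗ[R] ((F ⧸ K) →ₗ[R] (I ⊗[A] F)) :=
    { toFun := fun n => (qP n).restrictScalars R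
      map_add' := fun n m => LinearMap.ext fun y => by
        obtain ⟨x, rfl⟩ := Submodule.Quotient.mk_surjective K y
        show nel (n + m) ⊗ₜ[A] x = nel n ⊗ₜ[A] x + nel m ⊗ₜ[A] x
        have : nel (n + m) = nel n + nel m := by
          apply Subtype.ext
          exact TrivSqZeroExt.inr_add R n m
        rw [this, TensorProduct.add_tmul]
      map_smul' := fun r n => LinearMap.ext fun y => by
        obtain ⟨x, rfl⟩ := Submodule.Quotient.mk_surjective K y
        show nel (r • n) ⊗ₜ[A] x = r • (nel n ⊗ₜ[A] x)
        have : nel (r • n) = r • nel n := by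
          apply Subtype.ext
          exact inr_smul r n
        rw [this, TensorProduct.smul_tmul'] }
  letI ψ : ((F ⧸ K) ⊗[R] N) →ₗ[R] (I ⊗[A] F) := TensorProduct.lift bigΨ.flip
  have ψ_tmul : ∀ (x : F) (n : N),
      ψ ((Submodule.Quotient.mk x : F ⧸ K) ⊗ₜ[R] n) = nel n ⊗ₜ[A] x := fun x n => rfl
  -- the map φ : I ⊗[A] F → F, injective by flatness
  letI φ : (I ⊗[A] F) →ₗ[A] F :=
    (TensorProduct.lid A F).toLinearMap ∘ₗ LinearMap.rTensor F I.subtype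
  have φ_inj : Function.Injective φ := by
    have h1 : Function.Injective (LinearMap.rTensor F I.subtype) :=
      Module.Flat.rTensor_preserves_injective_linearMap I.subtype I.injective_subtype
    exact (TensorProduct.lid A F).injective.comp h1
  have φ_tmul : ∀ (i : I) (x : F), φ (i ⊗ₜ[A] x) = (i : A) • x := by
    intro i x
    simp only [φ, LinearMap.coe_comp, Function.comp_apply, LinearMap.rTensor_tmul,
      Submodule.coe_subtype, LinearEquiv.coe_coe, TensorProduct.lid_tmul]
  -- the map δ : I ⊗[A] F →+ (F ⧸ K) ⊗[R] N
  letI li : I → (F →ₗ[R] ((F ⧸ K) ⊗[R] N)) := fun i =>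
    ((TensorProduct.mk R (F ⧸ K) N).flip (TrivSqZeroExt.snd (i : A))).comp
      (K.mkQ.restrictScalars R)
  letI B : I →+ (F →+ ((F ⧸ K) ⊗[R] N)) :=
    { toFun := fun i => (li i).toAddMonoidHom
      map_zero' := by
        ext x
        show (Submodule.Quotient.mk x : F ⧸ K) ⊗ₜ[R] (TrivSqZeroExt.snd ((0 : I) : A)) = 0
        rw [ZeroMemClass.coe_zero, TrivSqZeroExt.snd_zero, TensorProduct.tmul_zero]
      map_add' := fun i j => by
        ext x
        show (Submodule.Quotient.mk x : F ⧸ K) ⊗ₜ[R] (TrivSqZeroExt.snd ((i + j : I) : A)) = _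
        rw [AddMemClass.coe_add, TrivSqZeroExt.snd_add, TensorProduct.tmul_add]
        rfl }
  have hB : ∀ (a : A) (i : I) (x : F), B (a • i) x = B i (a • x) := by
    intro a i x
    show (Submodule.Quotient.mk x : F ⧸ K) ⊗ₜ[R] (TrivSqZeroExt.snd ((a • i : I) : A)) =
      (Submodule.Quotient.mk (a • x) : F ⧸ K) ⊗ₜ[R] (TrivSqZeroExt.snd (i : A))
    have h1 : ((a • i : I) : A) = a * (i : A) := rfl
    have h2 : TrivSqZeroExt.snd (a * (i : A)) = TrivSqZeroExt.fst a • TrivSqZeroExt.snd (i : A) := by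
      rw [TrivSqZeroExt.snd_mul]
      have h0 : TrivSqZeroExt.fst (i : A) = 0 := (memI _).mp i.2
      rw [h0]
      simp
    rw [h1, h2, mkQ_smul a x, TensorProduct.tmul_smul, TensorProduct.smul_tmul']
  letI δ : (I ⊗[A] F) →+ ((F ⧸ K) ⊗[R] N) := TensorProduct.liftAddHom B hB
  have δ_tmul : ∀ (i : I) (x : F),
      δ (i ⊗ₜ[A] x) = (Submodule.Quotient.mk x : F ⧸ K) ⊗ₜ[R] (TrivSqZeroExt.snd (i : A)) :=
    fun i x => rfl
  -- δ ∘ ψ = id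
  have hδψ : ∀ t : ((F ⧸ K) ⊗[R] N), δ (ψ t) = t := by
    intro t
    induction t using TensorProduct.induction_on with
    | zero => simp
    | tmul y n =>
      obtain ⟨x, rfl⟩ := Submodule.Quotient.mk_surjective K y
      rw [ψ_tmul, δ_tmul]
      show (Submodule.Quotient.mk x : F ⧸ K) ⊗ₜ[R]
        (TrivSqZeroExt.snd (TrivSqZeroExt.inr n : A)) = _
      rw [TrivSqZeroExt.snd_inr]
    | add a b ha hb => rw [map_add, map_add, ha, hb]
  -- g = φ ∘ ψ
  have hgφψ : ∀ t : ((F ⧸ K) ⊗[R] N), g t = φ (ψ t) := by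
    intro t
    induction t using TensorProduct.induction_on with
    | zero => simp
    | tmul y n =>
      obtain ⟨x, rfl⟩ := Submodule.Quotient.mk_surjective K y
      rw [ψ_tmul, g_tmul, φ_tmul]
    | add a b ha hb => rw [map_add, map_add, map_add, ha, hb]
  refine ⟨g, g_tmul, ?_, ?_⟩
  · -- injectivity
    intro t₁ t₂ h
    have hψ : ψ t₁ = ψ t₂ := φ_inj (by rw [← hgφψ, ← hgφψ, h])
    rw [← hδψ t₁, ← hδψ t₂, hψ]
  · -- range
    apply le_antisymm
    · rintro x ⟨t, rfl⟩
      show g t ∈ K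
      induction t using TensorProduct.induction_on with
      | zero => simp
      | tmul y n =>
        obtain ⟨x, rfl⟩ := Submodule.Quotient.mk_surjective K y
        rw [g_tmul, hK]
        exact Submodule.smul_mem_smul (inr_mem n) trivial
      | add a b ha hb =>
        rw [map_add]
        exact K.add_mem ha hb
    · intro x hx
      have hx' : x ∈ K := hx
      rw [hK] at hx'
      refine Submodule.smul_induction_on hx' ?_ ?_
      · intro a ha y _
        refine ⟨(Submodule.Quotient.mk y : F ⧸ K) ⊗ₜ[R] (TrivSqZeroExt.snd a), ?_⟩
        rw [g_tmul, ← eq_inr a ha]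
      · intro y z hy hz
        exact (LinearMap.range g).add_mem hy hz
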